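/- Let K be a field of characteristic 2 and let φ: K[A,B,C,D,E] → K[x₁,x₂,x₃,x₄] be the ring homomorphism sending A,B,C,D to the elementary symmetric polynomials s₁,s₂,s₃,s₄ and E to Δ₄, the A₄-orbit sum of x₁³x₂²x₃. Then the polynomial f = E² + (A²D + ABC + C²)E + A⁴D² + A³C³ + A²B³D + B³C² + C⁴ lies in the kernel of φ. -/

import Mathlib

open MvPolynomial Finset

/-- The `A₄`-orbit sum of the monomial `x₁³x₂²x₃`. -/
noncomputable def Delta4 (K : Type*) [CommRing K] : MvPolynomial (Fin 4) K :=
  letI : DecidableEq (MvPolynomial (Fin 4) K) := Classical.decEq _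
  (Finset.univ.image (fun σ : alternatingGroup (Fin 4) =>
    rename (σ : Equiv.Perm (Fin 4)) (X 0 ^ 3 * X 1 ^ 2 * X 2))).sum id

theorem mono_inj {K : Type*} [CommRing K] [Nontrivial K] {a b c a' b' c' : Fin 4}
    (hab : a ≠ b) (hac : a ≠ c) (hbc : b ≠ c)
    (hab' : a' ≠ b') (hac' : a' ≠ c') (hbc' : b' ≠ c')
    (h : (X a ^ 3 * X b ^ 2 * X c : MvPolynomial (Fin 4) K) = X a' ^ 3 * X b' ^ 2 * X c') :
    a = a' ∧ b = b' ∧ c = c' := by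
  rw [show (X c : MvPolynomial (Fin 4) K) = X c ^ 1 from (pow_one _).symm,
    show (X c' : MvPolynomial (Fin 4) K) = X c' ^ 1 from (pow_one _).symm,
    X_pow_eq_monomial, X_pow_eq_monomial, X_pow_eq_monomial, X_pow_eq_monomial,
    X_pow_eq_monomial, X_pow_eq_monomial, monomial_mul, monomial_mul, monomial_mul,
    monomial_mul, one_mul, one_mul] at h
  have hD := monomial_left_injective (one_ne_zero (α := K)) h
  have key : ∀ x : Fin 4,
      (Finsupp.single a 3 + Finsupp.single b 2 + Finsupp.single c 1 : Fin 4 →₀ ℕ) x =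
      (Finsupp.single a' 3 + Finsupp.single b' 2 + Finsupp.single c' 1 : Fin 4 →₀ ℕ) x :=
    fun x => DFunLike.congr_fun hD x
  refine ⟨?_, ?_, ?_⟩
  · have := key a
    simp only [Finsupp.add_apply, Finsupp.single_apply] at this
    split_ifs at this <;> omega
  · have := key b
    simp only [Finsupp.add_apply, Finsupp.single_apply] at this
    split_ifs at this <;> omega
  · have := key c
    simp only [Finsupp.add_apply, Finsupp.single_apply] at this
    split_ifs at this <;> omega

set_option maxRecDepth 10000 in
theorem delta4_eq (K : Type*) [CommRing K] [Nontrivial K] :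
    Delta4 K =
      X 0^3*X 1^2*X 2 + X 0^3*X 2^2*X 3 + X 0^3*X 3^2*X 1
      + X 1^3*X 0^2*X 3 + X 1^3*X 2^2*X 0 + X 1^3*X 3^2*X 2
      + X 2^3*X 0^2*X 1 + X 2^3*X 1^2*X 3 + X 2^3*X 3^2*X 0
      + X 3^3*X 0^2*X 2 + X 3^3*X 1^2*X 0 + X 3^3*X 2^2*X 1 := by
  have hinj : Function.Injective (fun σ : alternatingGroup (Fin 4) =>
      rename (σ : Equiv.Perm (Fin 4)) (X 0 ^ 3 * X 1 ^ 2 * X 2 : MvPolynomial (Fin 4) K)) := by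
    intro σ τ hst
    simp only [map_mul, map_pow, rename_X] at hst
    obtain ⟨h0, h1, h2⟩ := mono_inj ((σ : Equiv.Perm (Fin 4)).injective.ne (by decide)) ((σ : Equiv.Perm (Fin 4)).injective.ne (by decide)) ((σ : Equiv.Perm (Fin 4)).injective.ne (by decide)) ((τ : Equiv.Perm (Fin 4)).injective.ne (by decide))
      ((τ : Equiv.Perm (Fin 4)).injective.ne (by decide))
      ((τ : Equiv.Perm (Fin 4)).injective.ne (by decide)) hst
    have h3 : (σ : Equiv.Perm (Fin 4)) 3 = (τ : Equiv.Perm (Fin 4)) 3 := by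
      have hyy : (τ : Equiv.Perm (Fin 4)) ((τ : Equiv.Perm (Fin 4))⁻¹ ((σ : Equiv.Perm (Fin 4)) 3))
          = (σ : Equiv.Perm (Fin 4)) 3 := Equiv.apply_symm_apply _ _
      set y := (τ : Equiv.Perm (Fin 4))⁻¹ ((σ : Equiv.Perm (Fin 4)) 3) with hy
      have hy0 : y ≠ 0 := by
        intro h; rw [h, ← h0] at hyy
        exact absurd ((σ : Equiv.Perm (Fin 4)).injective hyy) (by decide)
      have hy1 : y ≠ 1 := by
        intro h; rw [h, ← h1] at hyy
        exact absurd ((σ : Equiv.Perm (Fin 4)).injective hyy) (by decide)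
      have hy2 : y ≠ 2 := by
        intro h; rw [h, ← h2] at hyy
        exact absurd ((σ : Equiv.Perm (Fin 4)).injective hyy) (by decide)
      have hy3 : y = 3 := by omega
      rw [← hyy, hy3]
    have : (σ : Equiv.Perm (Fin 4)) = (τ : Equiv.Perm (Fin 4)) := by
      apply Equiv.ext
      intro x
      have : ∀ x : Fin 4, x = 0 ∨ x = 1 ∨ x = 2 ∨ x = 3 := by decide
      rcases this x with h | h | h | h <;> subst h <;> assumption
    exact Subtype.ext this
  have himg : (Finset.univ.image (fun σ : alternatingGroup (Fin 4) =>
      ((σ : Equiv.Perm (Fin 4)) 0, (σ : Equiv.Perm (Fin 4)) 1, (σ : Equiv.Perm (Fin 4)) 2))) =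
      ({(0,1,2), (0,2,3), (0,3,1), (1,0,3), (1,2,0), (1,3,2),
        (2,0,1), (2,1,3), (2,3,0), (3,0,2), (3,1,0), (3,2,1)} :
        Finset (Fin 4 × Fin 4 × Fin 4)) := by decide
  have hinj2 : ∀ σ ∈ (Finset.univ : Finset (alternatingGroup (Fin 4))),
      ∀ τ ∈ (Finset.univ : Finset (alternatingGroup (Fin 4))), ((σ : Equiv.Perm (Fin 4)) 0, (σ : Equiv.Perm (Fin 4)) 1,
        (σ : Equiv.Perm (Fin 4)) 2) = ((τ : Equiv.Perm (Fin 4)) 0, (τ : Equiv.Perm (Fin 4)) 1,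
        (τ : Equiv.Perm (Fin 4)) 2) → σ = τ := by decide
  letI : DecidableEq (MvPolynomial (Fin 4) K) := Classical.decEq _
  rw [Delta4, Finset.sum_image (fun x _ y _ h => hinj h)]
  have step : ∀ σ : alternatingGroup (Fin 4),
      rename (σ : Equiv.Perm (Fin 4)) (X 0 ^ 3 * X 1 ^ 2 * X 2 : MvPolynomial (Fin 4) K) =
      (fun t : Fin 4 × Fin 4 × Fin 4 => X t.1 ^ 3 * X t.2.1 ^ 2 * X t.2.2)
        ((σ : Equiv.Perm (Fin 4)) 0, (σ : Equiv.Perm (Fin 4)) 1, (σ : Equiv.Perm (Fin 4)) 2) := by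
    intro σ; simp [map_mul, map_pow, rename_X]
  simp only [id_eq]
  rw [Finset.sum_congr rfl (fun σ _ => step σ), ← Finset.sum_image (f := fun t : Fin 4 × Fin 4 × Fin 4 => X t.1 ^ 3 * X t.2.1 ^ 2 * X t.2.2) hinj2, himg]
  rw [Finset.sum_insert (by decide), Finset.sum_insert (by decide), Finset.sum_insert (by decide),
    Finset.sum_insert (by decide), Finset.sum_insert (by decide), Finset.sum_insert (by decide),
    Finset.sum_insert (by decide), Finset.sum_insert (by decide), Finset.sum_insert (by decide),
    Finset.sum_insert (by decide), Finset.sum_insert (by decide), Finset.sum_singleton]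
  ring

theorem esymm1 (K : Type*) [CommRing K] :
    esymm (Fin 4) K 1 = X 0 + X 1 + X 2 + X 3 := by
  have h : (Finset.univ : Finset (Fin 4)).powersetCard 1 = {{0},{1},{2},{3}} := by decide
  rw [esymm, h]
  rw [Finset.sum_insert (by decide), Finset.sum_insert (by decide), Finset.sum_insert (by decide),
    Finset.sum_singleton]
  repeat rw [Finset.prod_singleton]
  ring

set_option maxRecDepth 4000 in
theorem esymm2 (K : Type*) [CommRing K] :
    esymm (Fin 4) K 2 = X 0*X 1 + X 0*X 2 + X 0*X 3 + X 1*X 2 + X 1*X 3 + X 2*X 3 := by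
  have h : (Finset.univ : Finset (Fin 4)).powersetCard 2 =
      {{0,1},{0,2},{0,3},{1,2},{1,3},{2,3}} := by decide
  rw [esymm, h]
  rw [Finset.sum_insert (by decide), Finset.sum_insert (by decide), Finset.sum_insert (by decide),
    Finset.sum_insert (by decide), Finset.sum_insert (by decide), Finset.sum_singleton]
  repeat rw [Finset.prod_insert (by decide)]
  repeat rw [Finset.prod_singleton]
  ring

set_option maxRecDepth 4000 in
theorem esymm3 (K : Type*) [CommRing K] :
    esymm (Fin 4) K 3 = X 0*X 1*X 2 + X 0*X 1*X 3 + X 0*X 2*X 3 + X 1*X 2*X 3 := by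
  have h : (Finset.univ : Finset (Fin 4)).powersetCard 3 =
      {{0,1,2},{0,1,3},{0,2,3},{1,2,3}} := by decide
  rw [esymm, h]
  rw [Finset.sum_insert (by decide), Finset.sum_insert (by decide), Finset.sum_insert (by decide),
    Finset.sum_singleton]
  repeat rw [Finset.prod_insert (by decide)]
  repeat rw [Finset.prod_singleton]
  ring

set_option maxRecDepth 4000 in
theorem esymm4 (K : Type*) [CommRing K] :
    esymm (Fin 4) K 4 = X 0*X 1*X 2*X 3 := by
  have h : (Finset.univ : Finset (Fin 4)).powersetCard 4 = {{0,1,2,3}} := by decide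
  rw [esymm, h, Finset.sum_singleton]
  repeat rw [Finset.prod_insert (by decide)]
  repeat rw [Finset.prod_singleton]
  ring

set_option maxHeartbeats 2000000 in
/-- The polynomial `f = E² + (A²D+ABC+C²)E + A⁴D² + A³C³ + A²B³D + B³C² + C⁴`
lies in the kernel of the `K`-algebra map `K[A,B,C,D,E] → K[x₁,x₂,x₃,x₄]`
sending `A,B,C,D` to the elementary symmetric polynomials `s₁,s₂,s₃,s₄` and
`E` to `Δ₄`. -/
theorem quotientPoly_mem_ker (K : Type*) [Field K] [CharP K 2] :
    letI φ : MvPolynomial (Fin 5) K →ₐ[K] MvPolynomial (Fin 4) K :=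
      aeval ![esymm (Fin 4) K 1, esymm (Fin 4) K 2, esymm (Fin 4) K 3,
        esymm (Fin 4) K 4, Delta4 K]
    (X 4 ^ 2 + (X 0 ^ 2 * X 3 + X 0 * X 1 * X 2 + X 2 ^ 2) * X 4
        + X 0 ^ 4 * X 3 ^ 2 + X 0 ^ 3 * X 2 ^ 3 + X 0 ^ 2 * X 1 ^ 3 * X 3
        + X 1 ^ 3 * X 2 ^ 2 + X 2 ^ 4 : MvPolynomial (Fin 5) K)
      ∈ RingHom.ker φ.toRingHom := by
  rw [RingHom.mem_ker]
  simp only [AlgHom.toRingHom_eq_coe, RingHom.coe_coe, map_add, map_mul, map_pow, aeval_X, Matrix.cons_val_zero, Matrix.cons_val_one,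
    Matrix.head_cons, Matrix.cons_val_two, Matrix.tail_cons, Matrix.cons_val_three,
    Matrix.cons_val_four, Matrix.cons_val_succ]
  rw [esymm1, esymm2, esymm3, esymm4, delta4_eq]
  have h2 : (2 : MvPolynomial (Fin 4) K) = 0 := by
    have := CharP.cast_eq_zero (MvPolynomial (Fin 4) K) 2
    exact_mod_cast this
  linear_combination (X 1^2*X 2^4*X 3^6+X 1^2*X 2^5*X 3^5+X 1^3*X 2^3*X 3^6+5*X 1^3*X 2^4*X 3^5+5*X 1^3*X 2^5*X 3^4+X 1^3*X 2^6*X 3^3+5*X 1^4*X 2^3*X 3^5+8*X 1^4*X 2^4*X 3^4+5*X 1^4*X 2^5*X 3^3+X 1^4*X 2^6*X 3^2+X 1^5*X 2^2*X 3^5+5*X 1^5*X 2^3*X 3^4+5*X 1^5*X 2^4*X 3^3+X 1^5*X 2^5*X 3^2+X 1^6*X 2^2*X 3^4+X 1^6*X 2^3*X 3^3+X 0*X 1*X 2^4*X 3^6+4*X 0*X 1*X 2^5*X 3^5+X 0*X 1*X 2^6*X 3^4+5*X 0*X 1^2*X 2^3*X 3^6+22*X 0*X 1^2*X 2^4*X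 3^5+20*X 0*X 1^2*X 2^5*X 3^4+5*X 0*X 1^2*X 2^6*X 3^3+5*X 0*X 1^3*X 2^2*X 3^6+37*X 0*X 1^3*X 2^3*X 3^5+68*X 0*X 1^3*X 2^4*X 3^4+37*X 0*X 1^3*X 2^5*X 3^3+5*X 0*X 1^3*X 2^6*X 3^2+X 0*X 1^4*X 2*X 3^6+20*X 0*X 1^4*X 2^2*X 3^5+68*X 0*X 1^4*X 2^3*X 3^4+68*X 0*X 1^4*X 2^4*X 3^3+22*X 0*X 1^4*X 2^5*X 3^2+X 0*X 1^4*X 2^6*X 3+4*X 0*X 1^5*X 2*X 3^5+22*X 0*X 1^5*X 2^2*X 3^4+37*X 0*X 1^5*X 2^3*X 3^3+20*X 0*X 1^5*X 2^4*X 3^2+4*X 0*X 1^5*X 2^5*X 3+X 0*X 1^6*X 2*X 3^4+5*X 0*X 1^6*X 2^2*X 3^3+5*X 0*X 1^6*X 2^3*X 3^2+X 0*X 1^6*X 2^4*X 3+X 0^2*X 2^5*X 3^5+X 0^2*X 2^6*X 3^4+5*X 0^2*X 1*X 2^3*X 3^6+20*X 0^2*X 1*X 2^4*X 3^5+22*X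 0^2*X 1*X 2^5*X 3^4+5*X 0^2*X 1*X 2^6*X 3^3+8*X 0^2*X 1^2*X 2^2*X 3^6+68*X 0^2*X 1^2*X 2^3*X 3^5+124*X 0^2*X 1^2*X 2^4*X 3^4+68*X 0^2*X 1^2*X 2^5*X 3^3+8*X 0^2*X 1^2*X 2^6*X 3^2+5*X 0^2*X 1^3*X 2*X 3^6+68*X 0^2*X 1^3*X 2^2*X 3^5+211*X 0^2*X 1^3*X 2^3*X 3^4+211*X 0^2*X 1^3*X 2^4*X 3^3+68*X 0^2*X 1^3*X 2^5*X 3^2+5*X 0^2*X 1^3*X 2^6*X 3+X 0^2*X 1^4*X 3^6+22*X 0^2*X 1^4*X 2*X 3^5+124*X 0^2*X 1^4*X 2^2*X 3^4+211*X 0^2*X 1^4*X 2^3*X 3^3+124*X 0^2*X 1^4*X 2^4*X 3^2+20*X 0^2*X 1^4*X 2^5*X 3+X 0^2*X 1^5*X 3^5+20*X 0^2*X 1^5*X 2*X 3^4+68*X 0^2*X 1^5*X 2^2*X 3^3+68*X 0^2*X 1^5*X 2^3*X 3^2+22*X 0^2*X 1^5*X 2^4*X 3+X 0^2*X 1^5*X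 2^5+5*X 0^2*X 1^6*X 2*X 3^3+8*X 0^2*X 1^6*X 2^2*X 3^2+5*X 0^2*X 1^6*X 2^3*X 3+X 0^2*X 1^6*X 2^4+X 0^3*X 2^3*X 3^6+5*X 0^3*X 2^4*X 3^5+5*X 0^3*X 2^5*X 3^4+X 0^3*X 2^6*X 3^3+5*X 0^3*X 1*X 2^2*X 3^6+37*X 0^3*X 1*X 2^3*X 3^5+68*X 0^3*X 1*X 2^4*X 3^4+37*X 0^3*X 1*X 2^5*X 3^3+5*X 0^3*X 1*X 2^6*X 3^2+5*X 0^3*X 1^2*X 2*X 3^6+68*X 0^3*X 1^2*X 2^2*X 3^5+211*X 0^3*X 1^2*X 2^3*X 3^4+211*X 0^3*X 1^2*X 2^4*X 3^3+68*X 0^3*X 1^2*X 2^5*X 3^2+5*X 0^3*X 1^2*X 2^6*X 3+X 0^3*X 1^3*X 3^6+37*X 0^3*X 1^3*X 2*X 3^5+211*X 0^3*X 1^3*X 2^2*X 3^4+368*X 0^3*X 1^3*X 2^3*X 3^3+211*X 0^3*X 1^3*X 2^4*X 3^2+37*X 0^3*X 1^3*X 2^5*X 3+X 0^3*X 1^3*X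 2^6+5*X 0^3*X 1^4*X 3^5+68*X 0^3*X 1^4*X 2*X 3^4+211*X 0^3*X 1^4*X 2^2*X 3^3+211*X 0^3*X 1^4*X 2^3*X 3^2+68*X 0^3*X 1^4*X 2^4*X 3+5*X 0^3*X 1^4*X 2^5+5*X 0^3*X 1^5*X 3^4+37*X 0^3*X 1^5*X 2*X 3^3+68*X 0^3*X 1^5*X 2^2*X 3^2+37*X 0^3*X 1^5*X 2^3*X 3+5*X 0^3*X 1^5*X 2^4+X 0^3*X 1^6*X 3^3+5*X 0^3*X 1^6*X 2*X 3^2+5*X 0^3*X 1^6*X 2^2*X 3+X 0^3*X 1^6*X 2^3+X 0^4*X 2^2*X 3^6+5*X 0^4*X 2^3*X 3^5+8*X 0^4*X 2^4*X 3^4+5*X 0^4*X 2^5*X 3^3+X 0^4*X 1*X 2*X 3^6+22*X 0^4*X 1*X 2^2*X 3^5+68*X 0^4*X 1*X 2^3*X 3^4+68*X 0^4*X 1*X 2^4*X 3^3+20*X 0^4*X 1*X 2^5*X 3^2+X 0^4*X 1*X 2^6*X 3+20*X 0^4*X 1^2*X 2*X 3^5+124*X 0^4*X 1^2*X 2^2*X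 3^4+211*X 0^4*X 1^2*X 2^3*X 3^3+124*X 0^4*X 1^2*X 2^4*X 3^2+22*X 0^4*X 1^2*X 2^5*X 3+X 0^4*X 1^2*X 2^6+5*X 0^4*X 1^3*X 3^5+68*X 0^4*X 1^3*X 2*X 3^4+211*X 0^4*X 1^3*X 2^2*X 3^3+211*X 0^4*X 1^3*X 2^3*X 3^2+68*X 0^4*X 1^3*X 2^4*X 3+5*X 0^4*X 1^3*X 2^5+8*X 0^4*X 1^4*X 3^4+68*X 0^4*X 1^4*X 2*X 3^3+124*X 0^4*X 1^4*X 2^2*X 3^2+68*X 0^4*X 1^4*X 2^3*X 3+8*X 0^4*X 1^4*X 2^4+5*X 0^4*X 1^5*X 3^3+22*X 0^4*X 1^5*X 2*X 3^2+20*X 0^4*X 1^5*X 2^2*X 3+5*X 0^4*X 1^5*X 2^3+X 0^4*X 1^6*X 3^2+X 0^4*X 1^6*X 2*X 3+X 0^5*X 2^2*X 3^5+5*X 0^5*X 2^3*X 3^4+5*X 0^5*X 2^4*X 3^3+X 0^5*X 2^5*X 3^2+4*X 0^5*X 1*X 2*X 3^5+20*X 0^5*X 1*X 2^2*X 3^4+37*X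 0^5*X 1*X 2^3*X 3^3+22*X 0^5*X 1*X 2^4*X 3^2+4*X 0^5*X 1*X 2^5*X 3+X 0^5*X 1^2*X 3^5+22*X 0^5*X 1^2*X 2*X 3^4+68*X 0^5*X 1^2*X 2^2*X 3^3+68*X 0^5*X 1^2*X 2^3*X 3^2+20*X 0^5*X 1^2*X 2^4*X 3+X 0^5*X 1^2*X 2^5+5*X 0^5*X 1^3*X 3^4+37*X 0^5*X 1^3*X 2*X 3^3+68*X 0^5*X 1^3*X 2^2*X 3^2+37*X 0^5*X 1^3*X 2^3*X 3+5*X 0^5*X 1^3*X 2^4+5*X 0^5*X 1^4*X 3^3+20*X 0^5*X 1^4*X 2*X 3^2+22*X 0^5*X 1^4*X 2^2*X 3+5*X 0^5*X 1^4*X 2^3+X 0^5*X 1^5*X 3^2+4*X 0^5*X 1^5*X 2*X 3+X 0^5*X 1^5*X 2^2+X 0^6*X 2^3*X 3^3+X 0^6*X 2^4*X 3^2+X 0^6*X 1*X 2*X 3^4+5*X 0^6*X 1*X 2^2*X 3^3+5*X 0^6*X 1*X 2^3*X 3^2+X 0^6*X 1*X 2^4*X 3+X 0^6*X 1^2*X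 3^4+5*X 0^6*X 1^2*X 2*X 3^3+8*X 0^6*X 1^2*X 2^2*X 3^2+5*X 0^6*X 1^2*X 2^3*X 3+X 0^6*X 1^3*X 3^3+5*X 0^6*X 1^3*X 2*X 3^2+5*X 0^6*X 1^3*X 2^2*X 3+X 0^6*X 1^3*X 2^3+X 0^6*X 1^4*X 2*X 3+X 0^6*X 1^4*X 2^2) * h2
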